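/- Let W_2 ∈ ℝ^{d_y×d_1} and W_1 ∈ ℝ^{d_1×d_x} satisfy the balancedness condition W_2ᵀW_2 = W_1W_1ᵀ, and set p := min(d_x, d_1, d_y). Then ‖W_2‖_F² ≤ √p · ‖W_2W_1‖_F. -/

import Mathlib

open Matrix

noncomputable section

/-- Squared Frobenius norm ‖M‖_F² of a real matrix. -/
def frobSq {m n : ℕ} (M : Matrix (Fin m) (Fin n) ℝ) : ℝ := ∑ i, ∑ j, (M i j) ^ 2

/-- Frobenius norm ‖M‖_F of a real matrix. -/
def frobNorm {m n : ℕ} (M : Matrix (Fin m) (Fin n) ℝ) : ℝ := Real.sqrt (frobSq M)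

lemma frobSq_eq_trace {m n : ℕ} (M : Matrix (Fin m) (Fin n) ℝ) :
    frobSq M = (Mᵀ * M).trace := by
  simp only [frobSq, Matrix.trace, Matrix.diag, Matrix.mul_apply, transpose_apply, sq]
  exact Finset.sum_comm

lemma frobSq_nonneg {m n : ℕ} (M : Matrix (Fin m) (Fin n) ℝ) : 0 ≤ frobSq M := by
  unfold frobSq; positivity

/-- under the balancedness condition `W₂ᵀW₂ = W₁W₁ᵀ`, with
`p = min(d_x, d_1, d_y)`, one has `‖W₂‖_F² ≤ √p · ‖W₂W₁‖_F`. -/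
theorem stmt6
    (dx d1 dy : ℕ)
    (W2 : Matrix (Fin dy) (Fin d1) ℝ) (W1 : Matrix (Fin d1) (Fin dx) ℝ)
    (hbal : W2ᵀ * W2 = W1 * W1ᵀ) :
    frobNorm W2 ^ 2 ≤ Real.sqrt (min dx (min d1 dy)) * frobNorm (W2 * W1) := by
  set A : Matrix (Fin d1) (Fin d1) ℝ := W2ᵀ * W2 with hA_def
  have hA : A.IsHermitian := by simpa using isHermitian_conjTranspose_mul_self W2
  set lam := hA.eigenvalues with hlam
  set U : Matrix (Fin d1) (Fin d1) ℝ := (hA.eigenvectorUnitary : Matrix (Fin d1) (Fin d1) ℝ)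
  set D : Matrix (Fin d1) (Fin d1) ℝ := diagonal (RCLike.ofReal ∘ lam)
  have hUU : star U * U = 1 := Matrix.mem_unitaryGroup_iff'.mp hA.eigenvectorUnitary.2
  have hspec : A = U * D * star U := hA.spectral_theorem
  -- trace A = sum of eigenvalues
  have htrA : A.trace = ∑ i, lam i := by
    rw [hspec, Matrix.trace_mul_cycle, hUU, one_mul, trace_diagonal]
    simp
  -- trace (A*A) = sum of eigenvalues squared
  have htrA2 : (A * A).trace = ∑ i, lam i ^ 2 := by
    have : A * A = U * (D * D) * star U := by
      rw [hspec]
      simp only [mul_assoc]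
      rw [← mul_assoc (star U) U, hUU, one_mul]
    rw [this, Matrix.trace_mul_cycle, hUU, one_mul]
    simp [D, diagonal_mul_diagonal, trace_diagonal, sq]
  -- rank bounds
  have hrank : (A.rank : ℝ) ≤ (min dx (min d1 dy) : ℕ) := by
    have h1 : A.rank = W2.rank := rank_transpose_mul_self W2
    have h2 : A.rank = W1.rank := by rw [hbal]; exact rank_self_mul_transpose W1
    have : A.rank ≤ min dx (min d1 dy) := by
      refine le_min ?_ (le_min ?_ ?_)
      · exact h2.trans_le (rank_le_width W1)
      · exact h1.trans_le (rank_le_width W2)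
      · exact h1.trans_le (rank_le_height W2)
    exact_mod_cast this
  -- Cauchy-Schwarz on nonzero eigenvalues
  classical
  set S : Finset (Fin d1) := Finset.univ.filter (fun i => lam i ≠ 0) with hS
  have hcard : S.card = A.rank := by
    rw [hA.rank_eq_card_non_zero_eigs, Fintype.card_subtype]
  have hsumS : ∑ i ∈ S, lam i = ∑ i, lam i := Finset.sum_filter_ne_zero _
  have hCS : (∑ i, lam i) ^ 2 ≤ (A.rank : ℝ) * ∑ i, lam i ^ 2 := by
    rw [← hsumS, ← hcard]
    have h1 : (∑ i ∈ S, lam i) ^ 2 ≤ (S.card : ℝ) * ∑ i ∈ S, lam i ^ 2 :=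
      sq_sum_le_card_mul_sum_sq
    have h2 : ∑ i ∈ S, lam i ^ 2 ≤ ∑ i, lam i ^ 2 :=
      Finset.sum_le_sum_of_subset_of_nonneg (Finset.subset_univ S) (fun i _ _ => sq_nonneg _)
    exact h1.trans (mul_le_mul_of_nonneg_left h2 (Nat.cast_nonneg _))
  -- Frobenius identities
  have hfW2 : frobSq W2 = ∑ i, lam i := by rw [frobSq_eq_trace, ← hA_def, htrA]
  have hfWW : frobSq (W2 * W1) = ∑ i, lam i ^ 2 := by
    rw [frobSq_eq_trace, ← htrA2, transpose_mul]
    have h : W1ᵀ * W2ᵀ * (W2 * W1) = W1ᵀ * (A * W1) := by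
      rw [hA_def]; simp only [Matrix.mul_assoc]
    rw [h, Matrix.trace_mul_comm, Matrix.mul_assoc, ← hbal]
  have ht0 : 0 ≤ frobSq W2 := frobSq_nonneg W2
  have hp0 : (0:ℝ) ≤ ((min dx (min d1 dy) : ℕ) : ℝ) := Nat.cast_nonneg _
  have hsq : frobSq W2 ^ 2 ≤ ((min dx (min d1 dy) : ℕ) : ℝ) * frobSq (W2 * W1) := by
    rw [hfW2, hfWW]
    refine hCS.trans (mul_le_mul_of_nonneg_right hrank ?_)
    positivity
  have key : frobSq W2 ≤ Real.sqrt ((min dx (min d1 dy) : ℕ)) * frobNorm (W2 * W1) := by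
    have h := Real.le_sqrt_of_sq_le hsq
    rwa [Real.sqrt_mul hp0] at h
  have hcast : Real.sqrt ((min dx (min d1 dy) : ℕ)) =
      Real.sqrt (min (dx:ℝ) (min (d1:ℝ) (dy:ℝ))) := by push_cast; rfl
  calc frobNorm W2 ^ 2 = frobSq W2 := Real.sq_sqrt ht0
    _ ≤ Real.sqrt ((min dx (min d1 dy) : ℕ)) * frobNorm (W2 * W1) := key
    _ = _ := by rw [hcast]
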